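/- For every integer i ≥ 0 one has π_i(T) ∈ T^{p^i}·(1 + T·ℤ_p[[T]]) + p·T·ℤ_p[[T]]. -/

import Mathlib

open PowerSeries

noncomputable section

open scoped Classical in
/-- The series ℓ(T) = ∑_{i≥0} T^{p^i}/p^i over ℚ. -/
def lseries (p : ℕ) : PowerSeries ℚ :=
  PowerSeries.mk fun n => if ∃ i : ℕ, n = p ^ i then (n : ℚ)⁻¹ else 0

/-- Substitution `f(g)` of a power series `g` with zero constant coefficient
into a power series `f`. -/
def psComp {R : Type*} [CommSemiring R] (g f : PowerSeries R) : PowerSeries R :=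
  PowerSeries.mk fun n =>
    ∑ k ∈ Finset.range (n + 1), PowerSeries.coeff (R := R) k f * PowerSeries.coeff (R := R) n (g ^ k)

/-- The Artin–Hasse exponential E(T) = exp(∑ T^{p^i}/p^i) over ℚ. -/
def artinHasse (p : ℕ) : PowerSeries ℚ := psComp (lseries p) (PowerSeries.exp ℚ)

variable (p : ℕ) [Fact p.Prime]

/-- The property that `Ep` is the Artin–Hasse exponential regarded as a power
series with coefficients in `ℤ_p` (its coefficients lie in `ℤ_(p) ⊆ ℤ_p`). -/
def IsArtinHasseZp (Ep : PowerSeries ℤ_[p]) : Prop :=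
  PowerSeries.map (PadicInt.Coe.ringHom) Ep
    = PowerSeries.map (Rat.castHom ℚ_[p]) (artinHasse p)

/-- The property that `πfam i` is the power series `π_i(T) ∈ T·ℤ_p[[T]]`
with `E(π_i(T)) = (1+T)^{p^i}`. -/
def IsPiFamily (Ep : PowerSeries ℤ_[p]) (πfam : ℕ → PowerSeries ℤ_[p]) : Prop :=
  ∀ i : ℕ, PowerSeries.constantCoeff (R := ℤ_[p]) (πfam i) = 0
    ∧ psComp (πfam i) Ep = (1 + X) ^ p ^ i

section AuxS5

variable {R S : Type*} [CommSemiring R] [CommSemiring S]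

lemma map_psComp' (f : R →+* S) (g h : PowerSeries R) :
    PowerSeries.map f (psComp g h) = psComp (PowerSeries.map f g) (PowerSeries.map f h) := by
  ext n
  simp only [psComp, PowerSeries.coeff_map, PowerSeries.coeff_mk, map_sum, map_mul, ← map_pow]

lemma coeff_pow_eq_zero' {f : PowerSeries R} {d : ℕ}
    (hf : ∀ m, m < d → PowerSeries.coeff (R := R) m f = 0)
    {k n : ℕ} (h : n < k * d) : PowerSeries.coeff (R := R) n (f ^ k) = 0 := by
  induction k generalizing n with
  | zero => omega
  | succ k ih =>
    rw [pow_succ, PowerSeries.coeff_mul]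
    apply Finset.sum_eq_zero
    rintro ⟨a, b⟩ hab
    replace hab : a + b = n := Finset.HasAntidiagonal.mem_antidiagonal.mp hab
    by_cases hb : b < d
    · rw [hf b hb, mul_zero]
    · have hs : (k + 1) * d = k * d + d := Nat.succ_mul k d
      have : a < k * d := by omega
      rw [ih this, zero_mul]

lemma charP_powerSeries (R : Type*) [CommSemiring R] (q : ℕ) [CharP R q] :
    CharP (PowerSeries R) q := by
  constructor
  intro n
  constructor
  · intro h
    have : (PowerSeries.constantCoeff (R := R)) (n : PowerSeries R) = 0 := by rw [h, map_zero]
    rw [map_natCast] at this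
    exact (CharP.cast_eq_zero_iff R q n).mp this
  · intro h
    have h' : ((n : ℕ) : R) = 0 := (CharP.cast_eq_zero_iff R q n).mpr h
    rw [← map_natCast (PowerSeries.C (R := R)) n, h', map_zero]

/-- The key combinatorial lemma: if `E` has linear coefficient 1 and
`E(π) = 1 + X^N` with `π(0) = 0`, then `π = X^N·(1 + O(X))`. -/
lemma key_lemma {S : Type*} [CommRing S] (π E : PowerSeries S)
    (hπ0 : PowerSeries.constantCoeff (R := S) π = 0)
    (hE1 : PowerSeries.coeff (R := S) 1 E = 1) (N : ℕ) (hN : 1 ≤ N)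
    (hcomp : psComp π E = 1 + X ^ N) :
    ∀ n, 1 ≤ n → n ≤ N → PowerSeries.coeff (R := S) n π = if n = N then 1 else 0 := by
  intro n
  induction n using Nat.strong_induction_on with
  | _ n ih =>
    intro h1 h2
    have hlow : ∀ m, m < n → PowerSeries.coeff (R := S) m π = 0 := by
      intro m hm
      rcases Nat.eq_zero_or_pos m with rfl | hm1
      · simpa using hπ0
      · rw [ih m hm hm1 (le_trans (le_of_lt hm) h2), if_neg (by omega)]
    have h := congrArg (PowerSeries.coeff (R := S) n) hcomp
    rw [psComp, PowerSeries.coeff_mk] at h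
    rw [Finset.sum_eq_single 1] at h
    · rw [pow_one, hE1, one_mul] at h
      rw [h, map_add, PowerSeries.coeff_one, PowerSeries.coeff_X_pow, if_neg (by omega), zero_add]
    · intro k hk hk1
      rcases Nat.eq_zero_or_pos k with rfl | hkpos
      · rw [pow_zero, PowerSeries.coeff_one, if_neg (by omega), mul_zero]
      · have hk2 : 2 ≤ k := by omega
        rw [coeff_pow_eq_zero' hlow (by nlinarith), mul_zero]
    · intro h1'
      exact absurd (Finset.mem_range.mpr (by omega)) h1'

lemma exists_g_of_dvd (r : PowerSeries ℤ_[p])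
    (h0 : PowerSeries.coeff (R := ℤ_[p]) 0 r = 0)
    (hd : ∀ n, (p : ℤ_[p]) ∣ PowerSeries.coeff (R := ℤ_[p]) n r) :
    ∃ g : PowerSeries ℤ_[p], r = (p : PowerSeries ℤ_[p]) * (X * g) := by
  refine ⟨PowerSeries.mk fun m => (hd (m + 1)).choose, ?_⟩
  have hC : (p : PowerSeries ℤ_[p]) = PowerSeries.C (R := ℤ_[p]) (p : ℤ_[p]) :=
    (map_natCast (PowerSeries.C (R := ℤ_[p])) p).symm
  ext n
  cases n with
  | zero =>
    rw [h0, PowerSeries.coeff_zero_eq_constantCoeff, map_mul, map_mul,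
      PowerSeries.constantCoeff_X, zero_mul, mul_zero]
  | succ m =>
    rw [hC, PowerSeries.coeff_C_mul, PowerSeries.coeff_succ_X_mul, PowerSeries.coeff_mk,
      ← (hd (m + 1)).choose_spec]

end AuxS5

/-- for every `i ≥ 0` one has
`π_i(T) ∈ T^{p^i}·(1 + T·ℤ_p[[T]]) + p·T·ℤ_p[[T]]`. -/
theorem statement5
    (Ep : PowerSeries ℤ_[p]) (hEp : IsArtinHasseZp p Ep)
    (πfam : ℕ → PowerSeries ℤ_[p]) (hπ : IsPiFamily p Ep πfam) (i : ℕ) :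
    ∃ u g : PowerSeries ℤ_[p],
      πfam i = X ^ p ^ i * (1 + X * u) + (p : PowerSeries ℤ_[p]) * (X * g) := by
  have hp : p.Prime := Fact.out
  obtain ⟨h0, hcomp⟩ := hπ i
  set π := πfam i with hπdef
  -- Step 1: `coeff 1 Ep = 1`.
  have hAH1 : PowerSeries.coeff (R := ℚ) 1 (artinHasse p) = 1 := by
    rw [artinHasse, psComp, PowerSeries.coeff_mk, Finset.sum_range_succ, Finset.sum_range_succ,
      Finset.sum_range_zero, zero_add, pow_zero, pow_one, PowerSeries.coeff_one,
      if_neg one_ne_zero, mul_zero, zero_add, PowerSeries.coeff_exp]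
    have h1 : PowerSeries.coeff (R := ℚ) 1 (lseries p) = 1 := by
      rw [lseries, PowerSeries.coeff_mk, if_pos ⟨0, (pow_zero p).symm⟩]
      norm_num
    rw [h1]
    norm_num
  have hE1 : PowerSeries.coeff (R := ℤ_[p]) 1 Ep = 1 := by
    have := congrArg (PowerSeries.coeff (R := ℚ_[p]) 1) hEp
    rw [PowerSeries.coeff_map, PowerSeries.coeff_map, hAH1] at this
    apply Subtype.coe_injective
    exact this.trans PadicInt.coe_one.symm
  -- Step 2: reduce everything mod p.
  haveI : CharP (PowerSeries (ZMod p)) p := charP_powerSeries (ZMod p) p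
  set ρ : ℤ_[p] →+* ZMod p := PadicInt.toZMod
  have hcompbar : psComp (PowerSeries.map ρ π) (PowerSeries.map ρ Ep)
      = 1 + X ^ p ^ i := by
    rw [← map_psComp', hcomp, map_pow, map_add, map_one, PowerSeries.map_X,
      add_pow_char_pow, one_pow]
  have hNpos : 1 ≤ p ^ i := Nat.one_le_pow _ _ hp.pos
  have hkey := key_lemma (PowerSeries.map ρ π) (PowerSeries.map ρ Ep)
    (by rw [← PowerSeries.coeff_zero_eq_constantCoeff, PowerSeries.coeff_map,
          PowerSeries.coeff_zero_eq_constantCoeff_apply, h0, map_zero])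
    (by rw [PowerSeries.coeff_map, hE1, map_one]) (p ^ i) hNpos hcompbar
  -- Transfer to divisibility statements in ℤ_p.
  have hdvd_of_zmod : ∀ x : ℤ_[p], ρ x = 0 → (p : ℤ_[p]) ∣ x := by
    intro x hx
    have : x ∈ RingHom.ker ρ := hx
    rw [PadicInt.ker_toZMod, PadicInt.maximalIdeal_eq_span_p, Ideal.mem_span_singleton] at this
    exact this
  have hdvd : ∀ n, 1 ≤ n → n < p ^ i → (p : ℤ_[p]) ∣ PowerSeries.coeff (R := ℤ_[p]) n π := by
    intro n h1 h2
    apply hdvd_of_zmod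
    have := hkey n h1 (le_of_lt h2)
    rwa [PowerSeries.coeff_map, if_neg (by omega)] at this
  have hone : (p : ℤ_[p]) ∣ PowerSeries.coeff (R := ℤ_[p]) (p ^ i) π - 1 := by
    apply hdvd_of_zmod
    have := hkey (p ^ i) hNpos le_rfl
    rw [PowerSeries.coeff_map, if_pos rfl] at this
    rw [map_sub, this, map_one, sub_self]
  -- Step 3: build `u` and `g`.
  set u : PowerSeries ℤ_[p] := PowerSeries.mk fun m => PowerSeries.coeff (R := ℤ_[p]) (p ^ i + 1 + m) π
    with hu
  set A : PowerSeries ℤ_[p] := X ^ p ^ i * (1 + X * u) with hA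
  have hAcoeff : ∀ n, PowerSeries.coeff (R := ℤ_[p]) n A
      = if n = p ^ i then 1 else if p ^ i < n then PowerSeries.coeff (R := ℤ_[p]) n π else 0 := by
    intro n
    have : A = X ^ p ^ i + X ^ (p ^ i + 1) * u := by
      rw [hA, mul_add, mul_one, pow_succ]
      ring
    rw [this, map_add, PowerSeries.coeff_X_pow, PowerSeries.coeff_X_pow_mul', hu,
      PowerSeries.coeff_mk]
    split_ifs <;>
      first
        | omega
        | (rw [zero_add]; exact congrArg (fun m => PowerSeries.coeff (R := ℤ_[p]) m π) (by omega))
        | simp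
  have hr0 : PowerSeries.coeff (R := ℤ_[p]) 0 (π - A) = 0 := by
    rw [map_sub, hAcoeff, if_neg (by omega), if_neg (by omega), sub_zero,
      PowerSeries.coeff_zero_eq_constantCoeff, h0]
  have hrd : ∀ n, (p : ℤ_[p]) ∣ PowerSeries.coeff (R := ℤ_[p]) n (π - A) := by
    intro n
    rw [map_sub, hAcoeff]
    by_cases h1 : n = p ^ i
    · subst h1
      rw [if_pos rfl]
      exact hone
    · rw [if_neg h1]
      by_cases h2 : p ^ i < n
      · rw [if_pos h2, sub_self]
        exact dvd_zero _
      · rw [if_neg h2, sub_zero]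
        rcases Nat.eq_zero_or_pos n with rfl | hn
        · rw [PowerSeries.coeff_zero_eq_constantCoeff, h0]
          exact dvd_zero _
        · exact hdvd n hn (by omega)
  obtain ⟨g, hg⟩ := exists_g_of_dvd p (π - A) hr0 hrd
  refine ⟨u, g, ?_⟩
  rw [← hg, hA]
  ring

end
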